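/- Let N be an isolating neighbourhood with closed immediate exit set N^o, and suppose p ∈ fr N (the topological frontier of N) satisfies: for every ε > 0, φ(p,(-ε,0]) ∩ int N ≠ ∅. Then p ∈ N^o, i.e. t^o(p) = 0. -/

import Mathlib

open Set

/-- Exit point lemma: if `y ∈ N`, `N` closed, and `φ T y ∉ N` with `T ≥ 0`, there is an
exit time `s ∈ [0,T)`: the orbit stays in `N` on `[0,s]` and leaves immediately after. -/
lemma exit_aux {X : Type*} [MetricSpace X]
    (φ : ℝ → X → X)
    (hφcont : Continuous fun q : ℝ × X => φ q.1 q.2)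
    (hφzero : ∀ p, φ 0 p = p)
    (N : Set X) (hNc : IsClosed N) (y : X) (hy : y ∈ N)
    (T : ℝ) (hT : 0 ≤ T) (hTout : φ T y ∉ N) :
    ∃ s, 0 ≤ s ∧ s < T ∧ (∀ u ∈ Icc 0 s, φ u y ∈ N) ∧
      ∀ ε : ℝ, 0 < ε → ∃ u, s < u ∧ u ≤ s + ε ∧ φ u y ∉ N := by
  have hcy : Continuous fun u : ℝ => φ u y :=
    hφcont.comp (continuous_id.prodMk continuous_const)
  set S : Set ℝ := {s : ℝ | s ∈ Icc 0 T ∧ ∀ u ∈ Icc 0 s, φ u y ∈ N} with hS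
  have hTpos : 0 < T := by
    rcases lt_or_eq_of_le hT with h' | h'
    · exact h'
    · exact absurd (by rw [← h', hφzero]; exact hy) hTout
  have h0S : (0 : ℝ) ∈ S := by
    refine ⟨⟨le_refl 0, hT⟩, ?_⟩
    intro u hu
    have : u = 0 := le_antisymm hu.2 hu.1
    rw [this, hφzero]; exact hy
  have hSne : S.Nonempty := ⟨0, h0S⟩
  have hSbdd : BddAbove S := ⟨T, fun s hs => hs.1.2⟩
  set s₀ := sSup S with hs₀
  have hs₀0 : 0 ≤ s₀ := le_csSup hSbdd h0S
  have hs₀T : s₀ ≤ T := csSup_le hSne fun s hs => hs.1.2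
  -- all u ∈ [0, s₀) are in N
  have hA : ∀ u ∈ Ico (0:ℝ) s₀, φ u y ∈ N := by
    intro u hu
    obtain ⟨s, hsS, hus⟩ := exists_lt_of_lt_csSup hSne hu.2
    exact hsS.2 u ⟨hu.1, le_of_lt hus⟩
  -- φ s₀ y ∈ N
  have hB : φ s₀ y ∈ N := by
    rcases lt_or_eq_of_le hs₀0 with h0 | h0
    · -- 0 < s₀ : limit from the left
      have htend : Filter.Tendsto (fun u : ℝ => φ u y) (nhdsWithin s₀ (Iio s₀)) (nhds (φ s₀ y)) :=
        (hcy.tendsto s₀).mono_left nhdsWithin_le_nhds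
      refine hNc.mem_of_tendsto htend ?_
      have hmem : Ioo (0:ℝ) s₀ ∈ nhdsWithin s₀ (Iio s₀) :=
        Ioo_mem_nhdsLT_of_mem ⟨h0, le_refl _⟩
      filter_upwards [hmem] with u hu
      exact hA u ⟨le_of_lt hu.1, hu.2⟩
    · rw [← h0, hφzero]; exact hy
  have hAB : ∀ u ∈ Icc (0:ℝ) s₀, φ u y ∈ N := by
    intro u hu
    rcases lt_or_eq_of_le hu.2 with h' | h'
    · exact hA u ⟨hu.1, h'⟩
    · rw [h']; exact hB
  have hs₀ltT : s₀ < T := by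
    rcases lt_or_eq_of_le hs₀T with h' | h'
    · exact h'
    · exact absurd (by rw [← h']; exact hB) hTout
  refine ⟨s₀, hs₀0, hs₀ltT, hAB, ?_⟩
  intro ε hε
  by_contra hcon
  push_neg at hcon
  -- hcon : ∀ u, s₀ < u → u ≤ s₀ + ε → φ u y ∈ N
  have hs' : min (s₀ + ε) T ∈ S := by
    refine ⟨⟨le_trans hs₀0 (le_min (by linarith) (le_of_lt hs₀ltT)), min_le_right _ _⟩, ?_⟩
    intro u hu
    rcases le_or_gt u s₀ with h' | h'
    · exact hAB u ⟨hu.1, h'⟩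
    · exact hcon u h' (le_trans hu.2 (min_le_left _ _))
  have : min (s₀ + ε) T ≤ s₀ := le_csSup hSbdd hs'
  have : s₀ < min (s₀ + ε) T := lt_min (by linarith) hs₀ltT
  linarith

/-- If `N^o` is closed, `p ∈ fr N` and every interval `φ(p,(-ε,0])` meets `int N`,
then `p` is an immediate exit point: `p ∈ N^o` (equivalently `t^o(p) = 0`). -/
theorem stmt5 {X : Type*} [MetricSpace X]
    (φ : ℝ → X → X)
    (hφcont : Continuous fun q : ℝ × X => φ q.1 q.2)
    (hφzero : ∀ p, φ 0 p = p)
    (hφadd : ∀ s t p, φ (s + t) p = φ s (φ t p))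
    (N : Set X) (hN : IsCompact N)
    (hiso : ∀ p ∈ frontier N, ¬ ∀ t : ℝ, φ t p ∈ N)
    (hclosed : IsClosed {p ∈ N | ∀ ε : ℝ, 0 < ε → ¬ ∀ s ∈ Icc (0:ℝ) ε, φ s p ∈ N})
    (p : X) (hp : p ∈ frontier N)
    (h : ∀ ε : ℝ, 0 < ε → ∃ t : ℝ, -ε < t ∧ t ≤ 0 ∧ φ t p ∈ interior N) :
    p ∈ {p ∈ N | ∀ ε : ℝ, 0 < ε → ¬ ∀ s ∈ Icc (0:ℝ) ε, φ s p ∈ N} := by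
  have hNclosed : IsClosed N := hN.isClosed
  have hpN : p ∈ N := by
    have h1 := frontier_subset_closure (s := N) hp
    rwa [hNclosed.closure_eq] at h1
  have hpnotint : p ∉ interior N := fun hint => hp.2 hint
  refine ⟨hpN, ?_⟩
  intro ε hε H
  -- H : ∀ s ∈ Icc 0 ε, φ s p ∈ N ; derive False
  by_cases hcase : ∃ t, t < 0 ∧ (∀ u ∈ Icc t 0, φ u p ∈ N) ∧ φ t p ∈ interior N
  · -- Case (i): a whole backward segment lies in N with interior left endpoint
    obtain ⟨t, htneg, hseg, hqint⟩ := hcase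
    have hpc : p ∈ closure Nᶜ := by
      rw [frontier_eq_closure_inter_closure] at hp
      exact hp.2
    -- choose x k ∉ N close to p with φ t (x k) ∈ interior N
    have hx : ∀ k : ℕ, ∃ x, x ∉ N ∧ dist x p < 1/(k+1) ∧ φ t x ∈ interior N := by
      intro k
      have hU : IsOpen {x : X | φ t x ∈ interior N} :=
        isOpen_interior.preimage (hφcont.comp (continuous_const.prodMk continuous_id))
      have hpU : p ∈ {x : X | φ t x ∈ interior N} := hqint
      have hpball : p ∈ Metric.ball p (1/(k+1)) := by
        simp [Metric.mem_ball]
        positivity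
      have hopen : IsOpen (Metric.ball p (1/(k+1)) ∩ {x : X | φ t x ∈ interior N}) :=
        Metric.isOpen_ball.inter hU
      obtain ⟨x, hx1, hx2⟩ := mem_closure_iff.mp hpc _ hopen ⟨hpball, hpU⟩
      exact ⟨x, hx2, by simpa [Metric.mem_ball] using hx1.1, hx1.2⟩
    choose x hxN hxd hxint using hx
    have hxp : Filter.Tendsto x Filter.atTop (nhds p) := by
      rw [tendsto_iff_dist_tendsto_zero]
      refine squeeze_zero (fun k => dist_nonneg) (fun k => le_of_lt (hxd k)) ?_
      exact tendsto_one_div_add_atTop_nhds_zero_nat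
    -- exit times for the points y k = φ t (x k)
    have key : ∀ k : ℕ, ∃ s, 0 ≤ s ∧ s < -t ∧ (∀ u ∈ Icc 0 s, φ u (φ t (x k)) ∈ N) ∧
        ∀ ε' : ℝ, 0 < ε' → ∃ u, s < u ∧ u ≤ s + ε' ∧ φ u (φ t (x k)) ∉ N := by
      intro k
      have hout : φ (-t) (φ t (x k)) ∉ N := by
        rw [← hφadd, neg_add_cancel, hφzero]
        exact hxN k
      exact exit_aux φ hφcont hφzero N hNclosed (φ t (x k))
        (interior_subset (hxint k)) (-t) (by linarith) hout
    choose s hs0 hsT hsin hsexit using key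
    -- each exit point is in N^o
    set E := {q ∈ N | ∀ ε' : ℝ, 0 < ε' → ¬ ∀ u ∈ Icc (0:ℝ) ε', φ u q ∈ N} with hE
    have heE : ∀ k, φ (s k) (φ t (x k)) ∈ E := by
      intro k
      refine ⟨hsin k (s k) ⟨hs0 k, le_refl _⟩, ?_⟩
      intro ε' hε' Hc
      obtain ⟨u, hu1, hu2, hu3⟩ := hsexit k ε' hε'
      apply hu3
      have := Hc (u - s k) ⟨by linarith, by linarith⟩
      rwa [← hφadd, sub_add_cancel] at this
    -- extract a convergent subsequence of exit times
    obtain ⟨sl, hslmem, σ, hσmono, hσtend⟩ :=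
      (isCompact_Icc (a := (0:ℝ)) (b := -t)).tendsto_subseq
        (x := s) (fun k => ⟨hs0 k, le_of_lt (hsT k)⟩)
    have hxσ : Filter.Tendsto (fun k => x (σ k)) Filter.atTop (nhds p) :=
      hxp.comp hσmono.tendsto_atTop
    have htendpair : Filter.Tendsto (fun k => ((s (σ k) : ℝ), φ t (x (σ k)))) Filter.atTop
        (nhds (sl, φ t p)) := by
      refine Filter.Tendsto.prodMk_nhds hσtend ?_
      exact ((hφcont.comp (continuous_const.prodMk continuous_id)).tendsto p).comp hxσ
    have hetend : Filter.Tendsto (fun k => φ (s (σ k)) (φ t (x (σ k)))) Filter.atTop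
        (nhds (φ sl (φ t p))) :=
      (hφcont.tendsto (sl, φ t p)).comp htendpair
    have heElim : φ sl (φ t p) ∈ E :=
      hclosed.mem_of_tendsto hetend (Filter.Eventually.of_forall fun k => heE (σ k))
    -- contradiction: the limit point flows inside N for positive time
    have hsl0 : 0 ≤ sl := hslmem.1
    have hslt : sl ≤ -t := hslmem.2
    have hpos : 0 < ε - (sl + t) := by linarith
    apply heElim.2 (ε - (sl + t)) hpos
    intro u hu
    have heq : φ u (φ sl (φ t p)) = φ (u + sl + t) p := by
      rw [← hφadd, ← hφadd]
    rw [heq]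
    rcases le_or_gt (u + sl + t) 0 with h' | h'
    · exact hseg _ ⟨by linarith [hu.1], h'⟩
    · exact H _ ⟨le_of_lt h', by linarith [hu.2]⟩
  · -- Case (ii): exit points arbitrarily close to p in backward time
    push_neg at hcase
    set E := {q ∈ N | ∀ ε' : ℝ, 0 < ε' → ¬ ∀ u ∈ Icc (0:ℝ) ε', φ u q ∈ N} with hE
    have hv : ∀ n : ℕ, ∃ v : ℝ, -(1/(n+1)) < v ∧ v ≤ 0 ∧ φ v p ∈ E := by
      intro n
      obtain ⟨t, ht1, ht2, htint⟩ := h (1/(n+1)) (by positivity)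
      have htneg : t < 0 := by
        rcases lt_or_eq_of_le ht2 with h' | h'
        · exact h'
        · rw [h', hφzero] at htint
          exact absurd htint hpnotint
      have hexit : ∃ u ∈ Icc t 0, φ u p ∉ N := by
        by_contra h'
        push_neg at h'
        exact hcase t htneg h' htint
      obtain ⟨u, huI, huN⟩ := hexit
      have hout : φ (u - t) (φ t p) ∉ N := by
        rw [← hφadd, sub_add_cancel]
        exact huN
      obtain ⟨s, hs0, hsT, hsin, hsex⟩ := exit_aux φ hφcont hφzero N hNclosed (φ t p)
        (interior_subset htint) (u - t) (by linarith [huI.1]) hout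
      refine ⟨s + t, by linarith, by linarith [huI.2], ?_⟩
      constructor
      · have := hsin s ⟨hs0, le_refl _⟩
        rwa [← hφadd] at this
      · intro ε' hε' Hc
        obtain ⟨w, hw1, hw2, hw3⟩ := hsex ε' hε'
        apply hw3
        have := Hc (w - s) ⟨by linarith, by linarith⟩
        rw [← hφadd] at this
        have harg : w - s + (s + t) = w + t := by ring
        rw [harg] at this
        rw [← hφadd]
        exact this
    choose v hv1 hv2 hvE using hv
    have hvt : Filter.Tendsto v Filter.atTop (nhds (0:ℝ)) := by
      have hlo : Filter.Tendsto (fun n : ℕ => -(1/((n:ℝ)+1))) Filter.atTop (nhds (0:ℝ)) := by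
        have := (tendsto_one_div_add_atTop_nhds_zero_nat (𝕜 := ℝ)).neg
        simpa using this
      exact tendsto_of_tendsto_of_tendsto_of_le_of_le hlo tendsto_const_nhds
        (fun n => le_of_lt (hv1 n)) hv2
    have hφvt : Filter.Tendsto (fun n => φ (v n) p) Filter.atTop (nhds p) := by
      have h1 : Filter.Tendsto (fun n => ((v n : ℝ), p)) Filter.atTop (nhds ((0:ℝ), p)) :=
        hvt.prodMk_nhds tendsto_const_nhds
      have h2 := (hφcont.tendsto ((0:ℝ), p)).comp h1
      rwa [hφzero] at h2
    have hpE : p ∈ E :=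
      hclosed.mem_of_tendsto hφvt (Filter.Eventually.of_forall hvE)
    exact hpE.2 ε hε H
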